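/- arXiv:1903.07211 — 3 statements merged into one kernel-verified Lean document; each statement's English description precedes it below -/
import Mathlib

section
/- Under the isomorphism ρ between ⋀F_ξ ⊗ ⋀F_ξ* and End_k(⋀F_ξ), the contraction operator (ξ_i*)* ⌟ (−) on the second tensor factor corresponds to the graded commutator [ξ_i ∧ (−), −] on End_k(⋀F_ξ), and the contraction operator ξ_i* ⌟ (−) on the first tensor factor corresponds to the graded commutator [ξ_i* ⌟ (−), −] on End_k(⋀F_ξ). -/
/- Same model as for the previous statements: `⋀ F_ξ` is the free module on subsets
`S ⊆ {1,…,n}` and `⋀ F_ξ ⊗ ⋀ F_ξ^*` the free module on pairs of subsets; the isomorphism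
`ρ : ⋀ F_ξ ⊗ ⋀ F_ξ^* → End_k(⋀ F_ξ)` sends `ξ_A ⊗ ξ̄_B` to `(ξ_A ∧ −) ∘ (ξ_B^* ⌟ −)`.
The graded commutator of an odd operator `D` with a (not necessarily homogeneous) operator
`B` is `D ∘ B − ε ∘ B ∘ ε ∘ D`, where `ε` is the grading involution; for homogeneous `B`
this is `D B − (−1)^{|B|} B D`. -/

noncomputable section
namespace Stmt3

def ksign {n : ℕ} (i : Fin n) (S : Finset (Fin n)) : ℤ :=
  (-1) ^ (S.filter (fun j => j < i)).card

variable (k : Type*) [CommRing k] {n : ℕ}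

def wedgeOp (i : Fin n) : (Finset (Fin n) → k) →ₗ[k] (Finset (Fin n) → k) where
  toFun f S := if i ∈ S then ksign i S • f (S.erase i) else 0
  map_add' f g := by funext S; by_cases h : i ∈ S <;> simp [h, smul_add]
  map_smul' a f := by funext S; by_cases h : i ∈ S <;> simp [h]; ring

def contrOp (i : Fin n) : (Finset (Fin n) → k) →ₗ[k] (Finset (Fin n) → k) where
  toFun f S := if i ∈ S then 0 else ksign i S • f (insert i S)
  map_add' f g := by funext S; by_cases h : i ∈ S <;> simp [h, smul_add]
  map_smul' a f := by funext S; by_cases h : i ∈ S <;> simp [h]; ring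

/-- The grading involution `ε` on `⋀ F_ξ`, acting by `(−1)^{|S|}` on `ξ_S`. -/
def epsOp : Module.End k (Finset (Fin n) → k) where
  toFun f S := ((-1 : ℤ) ^ S.card) • f S
  map_add' f g := by funext S; simp [smul_add]
  map_smul' a f := by funext S; simp; ring

def wedgeMulti (S : Finset (Fin n)) : Module.End k (Finset (Fin n) → k) :=
  ((S.sort (· ≤ ·)).map (wedgeOp k)).prod

def contrMulti (S : Finset (Fin n)) : Module.End k (Finset (Fin n) → k) :=
  ((S.sort (· ≤ ·)).map (contrOp k)).prod

def rhoMap :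
    ((Finset (Fin n) × Finset (Fin n)) → k) →ₗ[k] Module.End k (Finset (Fin n) → k) where
  toFun z := ∑ p : Finset (Fin n) × Finset (Fin n), z p • (wedgeMulti k p.1 * contrMulti k p.2)
  map_add' z w := by simp [add_smul, Finset.sum_add_distrib]
  map_smul' a z := by simp [Finset.smul_sum, smul_smul]

/-- The graded commutator `[D, −]` for an odd operator `D`, extended linearly from homogeneous
operators: `[D, B] = D ∘ B − ε ∘ B ∘ ε ∘ D` where `ε` is the grading involution. -/
def scommOdd (D B : Module.End k (Finset (Fin n) → k)) : Module.End k (Finset (Fin n) → k) :=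
  D * B - epsOp k * B * epsOp k * D

/-- The contraction operator `(ξ_i^*)^* ⌟ (−)` acting on the second tensor factor of
`⋀ F_ξ ⊗ ⋀ F_ξ^*` (with its Koszul sign `(−1)^{|first factor|}`). -/
def sndContr (i : Fin n) (z : (Finset (Fin n) × Finset (Fin n)) → k) :
    (Finset (Fin n) × Finset (Fin n)) → k := fun p =>
  ((-1 : ℤ) ^ p.1.card) •
    (if i ∈ p.2 then 0 else ksign i p.2 • z (p.1, insert i p.2))

/-- The contraction operator `ξ_i^* ⌟ (−)` acting on the first tensor factor of
`⋀ F_ξ ⊗ ⋀ F_ξ^*` (no Koszul sign, being the leftmost factor). -/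
def fstContr (i : Fin n) (z : (Finset (Fin n) × Finset (Fin n)) → k) :
    (Finset (Fin n) × Finset (Fin n)) → k := fun p =>
  if i ∈ p.1 then 0 else ksign i p.1 • z (insert i p.1, p.2)


/-! ### Auxiliary lemmas -/

section Aux

-- `ksign` lemmas
theorem ksign_mul_self (i : Fin n) (S : Finset (Fin n)) : ksign i S * ksign i S = 1 := by
  rw [ksign, ← pow_add]; exact Even.neg_one_pow ⟨_, rfl⟩

theorem ksign_erase_self (i : Fin n) (S : Finset (Fin n)) :
    ksign i (S.erase i) = ksign i S := by
  unfold ksign; congr 2; ext j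
  simp only [Finset.mem_filter, Finset.mem_erase]
  exact ⟨fun ⟨⟨_, hj⟩, h⟩ => ⟨hj, h⟩, fun ⟨hj, h⟩ => ⟨⟨ne_of_lt h, hj⟩, h⟩⟩

theorem ksign_insert_self (i : Fin n) (S : Finset (Fin n)) :
    ksign i (insert i S) = ksign i S := by
  unfold ksign; congr 2; ext j
  simp only [Finset.mem_filter, Finset.mem_insert]
  constructor
  · rintro ⟨rfl | h1, h⟩
    · exact absurd h (lt_irrefl _)
    · exact ⟨h1, h⟩
  · rintro ⟨hj, h⟩; exact ⟨Or.inr hj, h⟩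

theorem ksign_insert (i j : Fin n) (S : Finset (Fin n)) (h : i ∉ S) :
    ksign j (insert i S) = (if i < j then -1 else 1) * ksign j S := by
  unfold ksign
  by_cases hij : i < j
  · rw [Finset.filter_insert, if_pos hij, Finset.card_insert_of_notMem (by simp [h]), if_pos hij]
    ring
  · rw [Finset.filter_insert, if_neg hij, if_neg hij, one_mul]

theorem ksign_erase (i j : Fin n) (S : Finset (Fin n)) (h : i ∈ S) :
    ksign j S = (if i < j then -1 else 1) * ksign j (S.erase i) := by
  conv_lhs => rw [← Finset.insert_erase h]
  rw [ksign_insert i j _ (Finset.notMem_erase i S)]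

@[simp] theorem wedgeOp_apply (i : Fin n) (f : Finset (Fin n) → k) (S : Finset (Fin n)) :
    wedgeOp k i f S = if i ∈ S then ksign i S • f (S.erase i) else 0 := rfl
@[simp] theorem contrOp_apply (i : Fin n) (f : Finset (Fin n) → k) (S : Finset (Fin n)) :
    contrOp k i f S = if i ∈ S then 0 else ksign i S • f (insert i S) := rfl
@[simp] theorem epsOp_apply (f : Finset (Fin n) → k) (S : Finset (Fin n)) :
    epsOp k f S = ((-1 : ℤ) ^ S.card) • f S := rfl

-- single-operator relations
theorem eps_mul_eps : epsOp k * epsOp k = (1 : Module.End k (Finset (Fin n) → k)) := by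
  apply LinearMap.ext; intro f; funext S
  simp only [Module.End.mul_apply, epsOp_apply, Module.End.one_apply, smul_smul, ← pow_add]
  rw [Even.neg_one_pow ⟨S.card, rfl⟩, one_smul]

theorem eps_wedge (i : Fin n) :
    epsOp k * wedgeOp k i = (-1 : ℤ) • (wedgeOp k i * epsOp k) := by
  apply LinearMap.ext; intro f; funext S
  simp only [Module.End.mul_apply, LinearMap.smul_apply, Pi.smul_apply, wedgeOp_apply, epsOp_apply]
  by_cases h : i ∈ S
  · rw [if_pos h, if_pos h, ← Finset.card_erase_add_one h, pow_succ]
    simp only [smul_smul, zsmul_eq_mul]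
    push_cast; ring
  · simp [h]

theorem eps_contr (i : Fin n) :
    epsOp k * contrOp k i = (-1 : ℤ) • (contrOp k i * epsOp k) := by
  apply LinearMap.ext; intro f; funext S
  simp only [Module.End.mul_apply, LinearMap.smul_apply, Pi.smul_apply, contrOp_apply, epsOp_apply]
  by_cases h : i ∈ S
  · simp [h]
  · rw [if_neg h, if_neg h, Finset.card_insert_of_notMem h, pow_succ]
    simp only [smul_smul, zsmul_eq_mul]
    push_cast; ring

theorem wedge_wedge (i j : Fin n) :
    wedgeOp k i * wedgeOp k j = (-1 : ℤ) • (wedgeOp k j * wedgeOp k i) := by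
  apply LinearMap.ext; intro f; funext S
  simp only [Module.End.mul_apply, LinearMap.smul_apply, Pi.smul_apply, wedgeOp_apply]
  by_cases hi : i ∈ S <;> by_cases hj : j ∈ S
  · by_cases hij : i = j
    · subst hij; simp [Finset.notMem_erase]
    · rw [if_pos hi, if_pos hj, if_pos (Finset.mem_erase.2 ⟨Ne.symm hij, hj⟩),
        if_pos (Finset.mem_erase.2 ⟨hij, hi⟩), Finset.erase_right_comm,
        ksign_erase i j S hi, ksign_erase j i S hj]
      simp only [smul_smul, zsmul_eq_mul, smul_eq_mul]
      rcases Ne.lt_or_gt hij with h1 | h1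
      · rw [if_pos h1, if_neg (asymm h1)]; push_cast; ring
      · rw [if_neg (asymm h1), if_pos h1]; push_cast; ring
  · simp [hi, hj, Finset.mem_erase]
  · simp [hi, hj, Finset.mem_erase]
  · simp [hi, hj]

theorem contr_contr (i j : Fin n) :
    contrOp k i * contrOp k j = (-1 : ℤ) • (contrOp k j * contrOp k i) := by
  apply LinearMap.ext; intro f; funext S
  simp only [Module.End.mul_apply, LinearMap.smul_apply, Pi.smul_apply, contrOp_apply]
  by_cases hi : i ∈ S <;> by_cases hj : j ∈ S
  · simp [hi, hj]
  · simp [hi, hj, Finset.mem_insert]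
  · simp [hi, hj, Finset.mem_insert]
  · by_cases hij : i = j
    · subst hij; simp [hi]
    · rw [if_neg hi, if_neg hj,
        if_neg (by simp [Finset.mem_insert, hj, Ne.symm hij] : j ∉ insert i S),
        if_neg (by simp [Finset.mem_insert, hi, hij] : i ∉ insert j S),
        Finset.insert_comm, ksign_insert j i S hj, ksign_insert i j S hi]
      simp only [smul_smul, zsmul_eq_mul, smul_eq_mul]
      rcases Ne.lt_or_gt hij with h1 | h1
      · rw [if_pos h1, if_neg (asymm h1)]; push_cast; ring
      · rw [if_neg (asymm h1), if_pos h1]; push_cast; ring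

theorem wedge_contr (i j : Fin n) (hij : i ≠ j) :
    wedgeOp k i * contrOp k j = (-1 : ℤ) • (contrOp k j * wedgeOp k i) := by
  apply LinearMap.ext; intro f; funext S
  simp only [Module.End.mul_apply, LinearMap.smul_apply, Pi.smul_apply, wedgeOp_apply,
    contrOp_apply]
  by_cases hi : i ∈ S <;> by_cases hj : j ∈ S
  · simp [hi, hj, Ne.symm hij]
  · rw [if_pos hi, if_neg hj, if_neg (by simp [Finset.mem_erase, hj] : j ∉ S.erase i),
      if_pos (by simp [Finset.mem_insert, hi] : i ∈ insert j S),
      Finset.erase_insert_of_ne (Ne.symm hij),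
      ksign_insert j i S hj, ksign_erase i j S hi]
    simp only [smul_smul, zsmul_eq_mul, smul_eq_mul]
    rcases Ne.lt_or_gt hij with h1 | h1
    · rw [if_pos h1, if_neg (asymm h1)]; push_cast; ring
    · rw [if_neg (asymm h1), if_pos h1]; push_cast; ring
  · simp [hi, hj]
  · simp [hi, hj, Finset.mem_insert, hij]

theorem wedge_contr_self (i : Fin n) :
    wedgeOp k i * contrOp k i + contrOp k i * wedgeOp k i = 1 := by
  apply LinearMap.ext; intro f; funext S
  simp only [LinearMap.add_apply, Module.End.mul_apply, Pi.add_apply, wedgeOp_apply,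
    contrOp_apply, Module.End.one_apply]
  by_cases hi : i ∈ S
  · rw [if_pos hi, if_pos hi, if_neg (Finset.notMem_erase i S), Finset.insert_erase hi,
      ksign_erase_self, smul_smul, ksign_mul_self, one_smul, add_zero]
  · rw [if_neg hi, if_neg hi, if_pos (Finset.mem_insert_self i S), Finset.erase_insert hi,
      ksign_insert_self, smul_smul, ksign_mul_self, one_smul, zero_add]

theorem wedge_mul_contr_self (i : Fin n) :
    wedgeOp k i * contrOp k i = 1 - contrOp k i * wedgeOp k i := by
  rw [eq_sub_iff_add_eq]; exact wedge_contr_self k i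

theorem contr_mul_wedge_self (i : Fin n) :
    contrOp k i * wedgeOp k i = 1 - wedgeOp k i * contrOp k i := by
  rw [eq_sub_iff_add_eq, add_comm]; exact wedge_contr_self k i

-- list-level lemmas
theorem anticomm_list (D : Module.End k (Finset (Fin n) → k))
    (l : List (Module.End k (Finset (Fin n) → k)))
    (h : ∀ x ∈ l, D * x = (-1 : ℤ) • (x * D)) :
    D * l.prod = ((-1 : ℤ) ^ l.length) • (l.prod * D) := by
  induction l with
  | nil => simp
  | cons x t ih =>
    simp only [List.prod_cons, List.length_cons, ← mul_assoc]
    rw [h x (List.mem_cons_self), smul_mul_assoc, mul_assoc,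
      ih (fun y hy => h y (List.mem_cons_of_mem x hy)), mul_smul_comm, smul_smul, pow_succ]
    rw [mul_comm ((-1 : ℤ) ^ t.length) (-1 : ℤ), mul_assoc]

theorem erase_sort (i : Fin n) (B : Finset (Fin n)) :
    (B.sort (· ≤ ·)).erase i = (B.erase i).sort (· ≤ ·) := by
  have hp : List.Perm ((B.sort (· ≤ ·)).erase i) ((B.erase i).sort (· ≤ ·)) := by
    rw [← Multiset.coe_eq_coe, ← Multiset.coe_erase, Finset.sort_eq, Finset.sort_eq,
      Finset.erase_val]
  exact List.Perm.eq_of_pairwise'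
    ((Finset.pairwise_sort _ _).sublist (List.erase_sublist ..)) (Finset.pairwise_sort _ _) hp

theorem filter_sort_length (i : Fin n) (B : Finset (Fin n)) :
    ((B.sort (· ≤ ·)).filter (fun j => j < i)).length = (B.filter (fun j => j < i)).card := by
  rw [← List.countP_eq_length_filter, ← Multiset.coe_countP, Finset.sort_eq,
    Multiset.countP_eq_card_filter, ← Finset.filter_val]
  rfl

theorem eps_mul_wedgeMulti (A : Finset (Fin n)) :
    epsOp k * wedgeMulti k A = ((-1 : ℤ) ^ A.card) • (wedgeMulti k A * epsOp k) := by
  have := anticomm_list k (epsOp k) ((A.sort (· ≤ ·)).map (wedgeOp k)) (by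
    intro x hx
    obtain ⟨j, _, rfl⟩ := List.mem_map.1 hx
    exact eps_wedge k j)
  rwa [List.length_map, Finset.length_sort] at this

theorem eps_mul_contrMulti (B : Finset (Fin n)) :
    epsOp k * contrMulti k B = ((-1 : ℤ) ^ B.card) • (contrMulti k B * epsOp k) := by
  have := anticomm_list k (epsOp k) ((B.sort (· ≤ ·)).map (contrOp k)) (by
    intro x hx
    obtain ⟨j, _, rfl⟩ := List.mem_map.1 hx
    exact eps_contr k j)
  rwa [List.length_map, Finset.length_sort] at this

theorem wedge_mul_wedgeMulti (i : Fin n) (A : Finset (Fin n)) :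
    wedgeOp k i * wedgeMulti k A = ((-1 : ℤ) ^ A.card) • (wedgeMulti k A * wedgeOp k i) := by
  have := anticomm_list k (wedgeOp k i) ((A.sort (· ≤ ·)).map (wedgeOp k)) (by
    intro x hx
    obtain ⟨j, _, rfl⟩ := List.mem_map.1 hx
    exact wedge_wedge k i j)
  rwa [List.length_map, Finset.length_sort] at this

theorem contr_mul_contrMulti (i : Fin n) (B : Finset (Fin n)) :
    contrOp k i * contrMulti k B = ((-1 : ℤ) ^ B.card) • (contrMulti k B * contrOp k i) := by
  have := anticomm_list k (contrOp k i) ((B.sort (· ≤ ·)).map (contrOp k)) (by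
    intro x hx
    obtain ⟨j, _, rfl⟩ := List.mem_map.1 hx
    exact contr_contr k i j)
  rwa [List.length_map, Finset.length_sort] at this

theorem eps_conj (A B : Finset (Fin n)) :
    epsOp k * (wedgeMulti k A * contrMulti k B) * epsOp k =
      ((-1 : ℤ) ^ (A.card + B.card)) • (wedgeMulti k A * contrMulti k B) := by
  calc epsOp k * (wedgeMulti k A * contrMulti k B) * epsOp k
      = (epsOp k * wedgeMulti k A) * (contrMulti k B * epsOp k) := by
        simp only [mul_assoc]
    _ = ((-1 : ℤ) ^ A.card) • (wedgeMulti k A *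
          ((epsOp k * contrMulti k B) * epsOp k)) := by
        rw [eps_mul_wedgeMulti, smul_mul_assoc, mul_assoc, ← mul_assoc (epsOp k)]
    _ = ((-1 : ℤ) ^ (A.card + B.card)) • (wedgeMulti k A * contrMulti k B) := by
        rw [eps_mul_contrMulti, smul_mul_assoc, mul_smul_comm, mul_assoc (contrMulti k B), eps_mul_eps, mul_one,
          smul_smul, pow_add]

-- the key correction lemmas (list level)
theorem wedge_contrList (i : Fin n) (l : List (Fin n)) (hl : l.Pairwise (· < ·)) :
    wedgeOp k i * (l.map (contrOp k)).prod =
      ((-1 : ℤ) ^ l.length) • ((l.map (contrOp k)).prod * wedgeOp k i) +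
      (if i ∈ l then
        ((-1 : ℤ) ^ (l.filter (fun j => j < i)).length) • ((l.erase i).map (contrOp k)).prod
       else 0) := by
  induction l with
  | nil => simp
  | cons j t ih =>
    have hst : t.Pairwise (· < ·) := hl.of_cons
    have hjt : ∀ x ∈ t, j < x := fun x hx => List.rel_of_pairwise_cons hl hx
    have iht := ih hst
    by_cases hij : i = j
    · subst hij
      have hit : i ∉ t := fun h => lt_irrefl i (hjt i h)
      rw [if_neg hit, add_zero] at iht
      have hfl : ((i :: t).filter (fun j => j < i)) = [] := by
        rw [List.filter_cons_of_neg (by simp)]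
        exact List.filter_eq_nil_iff.2 (fun x hx => by simp [asymm (hjt x hx)])
      rw [List.map_cons, List.prod_cons, List.length_cons, if_pos (List.mem_cons_self),
        List.erase_cons_head, hfl, List.length_nil, pow_zero, one_smul]
      rw [← mul_assoc, wedge_mul_contr_self, sub_mul, one_mul, mul_assoc, iht,
        mul_smul_comm, pow_succ, mul_comm ((-1 : ℤ) ^ t.length) (-1 : ℤ), ← smul_smul,
        neg_one_zsmul, ← mul_assoc, sub_eq_add_neg, add_comm]
    · have hmem : (i ∈ j :: t) = (i ∈ t) := by simp [List.mem_cons, hij]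
      have herase : (j :: t).erase i = j :: t.erase i :=
        List.erase_cons_tail (by simp [Ne.symm hij])
      simp only [List.map_cons, List.prod_cons, List.length_cons, hmem, herase]
      rw [← mul_assoc, wedge_contr k i j hij, smul_mul_assoc, mul_assoc, iht, mul_add,
        mul_smul_comm, smul_add, smul_smul]
      congr 1
      · rw [mul_assoc, pow_succ, mul_comm ((-1 : ℤ) ^ t.length) (-1 : ℤ)]
      · by_cases hit : i ∈ t
        · rw [if_pos hit, if_pos hit, mul_smul_comm, smul_smul,
            List.filter_cons_of_pos (by simpa using hjt i hit), List.length_cons, pow_succ,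
            mul_comm ((-1 : ℤ) ^ (List.filter (fun j => decide (j < i)) t).length) (-1 : ℤ)]
        · rw [if_neg hit, if_neg hit, mul_zero, smul_zero]

theorem contr_wedgeList (i : Fin n) (l : List (Fin n)) (hl : l.Pairwise (· < ·)) :
    contrOp k i * (l.map (wedgeOp k)).prod =
      ((-1 : ℤ) ^ l.length) • ((l.map (wedgeOp k)).prod * contrOp k i) +
      (if i ∈ l then
        ((-1 : ℤ) ^ (l.filter (fun j => j < i)).length) • ((l.erase i).map (wedgeOp k)).prod
       else 0) := by
  induction l with
  | nil => simp
  | cons j t ih =>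
    have hst : t.Pairwise (· < ·) := hl.of_cons
    have hjt : ∀ x ∈ t, j < x := fun x hx => List.rel_of_pairwise_cons hl hx
    have iht := ih hst
    by_cases hij : i = j
    · subst hij
      have hit : i ∉ t := fun h => lt_irrefl i (hjt i h)
      rw [if_neg hit, add_zero] at iht
      have hfl : ((i :: t).filter (fun j => j < i)) = [] := by
        rw [List.filter_cons_of_neg (by simp)]
        exact List.filter_eq_nil_iff.2 (fun x hx => by simp [asymm (hjt x hx)])
      rw [List.map_cons, List.prod_cons, List.length_cons, if_pos (List.mem_cons_self),
        List.erase_cons_head, hfl, List.length_nil, pow_zero, one_smul]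
      rw [← mul_assoc, contr_mul_wedge_self, sub_mul, one_mul, mul_assoc, iht,
        mul_smul_comm, pow_succ, mul_comm ((-1 : ℤ) ^ t.length) (-1 : ℤ), ← smul_smul,
        neg_one_zsmul, ← mul_assoc, sub_eq_add_neg, add_comm]
    · have hmem : (i ∈ j :: t) = (i ∈ t) := by simp [List.mem_cons, hij]
      have herase : (j :: t).erase i = j :: t.erase i :=
        List.erase_cons_tail (by simp [Ne.symm hij])
      have hcw : contrOp k i * wedgeOp k j = (-1 : ℤ) • (wedgeOp k j * contrOp k i) := by
        have := wedge_contr k j i (Ne.symm hij)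
        rw [this, smul_smul]; simp
      simp only [List.map_cons, List.prod_cons, List.length_cons, hmem, herase]
      rw [← mul_assoc, hcw, smul_mul_assoc, mul_assoc, iht, mul_add,
        mul_smul_comm, smul_add, smul_smul]
      congr 1
      · rw [mul_assoc, pow_succ, mul_comm ((-1 : ℤ) ^ t.length) (-1 : ℤ)]
      · by_cases hit : i ∈ t
        · rw [if_pos hit, if_pos hit, mul_smul_comm, smul_smul,
            List.filter_cons_of_pos (by simpa using hjt i hit), List.length_cons, pow_succ,
            mul_comm ((-1 : ℤ) ^ (List.filter (fun j => decide (j < i)) t).length) (-1 : ℤ)]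
        · rw [if_neg hit, if_neg hit, mul_zero, smul_zero]

theorem wedge_mul_contrMulti (i : Fin n) (B : Finset (Fin n)) :
    wedgeOp k i * contrMulti k B =
      ((-1 : ℤ) ^ B.card) • (contrMulti k B * wedgeOp k i) +
      (if i ∈ B then ksign i B • contrMulti k (B.erase i) else 0) := by
  have h := wedge_contrList k i (B.sort (· ≤ ·)) (Finset.sortedLT_sort B).pairwise
  simp only [Finset.length_sort, filter_sort_length, erase_sort, Finset.mem_sort] at h
  exact h

theorem contr_mul_wedgeMulti (i : Fin n) (A : Finset (Fin n)) :
    contrOp k i * wedgeMulti k A =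
      ((-1 : ℤ) ^ A.card) • (wedgeMulti k A * contrOp k i) +
      (if i ∈ A then ksign i A • wedgeMulti k (A.erase i) else 0) := by
  have h := contr_wedgeList k i (A.sort (· ≤ ·)) (Finset.sortedLT_sort A).pairwise
  simp only [Finset.length_sort, filter_sort_length, erase_sort, Finset.mem_sort] at h
  exact h

-- basis-level commutator formulas
theorem scomm_wedge_basis (i : Fin n) (A B : Finset (Fin n)) :
    scommOdd k (wedgeOp k i) (wedgeMulti k A * contrMulti k B) =
      if i ∈ B then
        (((-1 : ℤ) ^ A.card * ksign i B)) • (wedgeMulti k A * contrMulti k (B.erase i))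
      else 0 := by
  rw [scommOdd, eps_conj, smul_mul_assoc, ← mul_assoc, wedge_mul_wedgeMulti, smul_mul_assoc,
    mul_assoc, wedge_mul_contrMulti, mul_add, mul_smul_comm, smul_add, smul_smul,
    ← mul_assoc (wedgeMulti k A), ← pow_add, add_sub_cancel_left]
  by_cases hiB : i ∈ B
  · rw [if_pos hiB, if_pos hiB, mul_smul_comm, smul_smul]
  · rw [if_neg hiB, if_neg hiB, mul_zero, smul_zero]

theorem scomm_contr_basis (i : Fin n) (A B : Finset (Fin n)) :
    scommOdd k (contrOp k i) (wedgeMulti k A * contrMulti k B) =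
      if i ∈ A then
        ksign i A • (wedgeMulti k (A.erase i) * contrMulti k B)
      else 0 := by
  rw [scommOdd, eps_conj, smul_mul_assoc, ← mul_assoc, contr_mul_wedgeMulti, add_mul,
    smul_mul_assoc, mul_assoc, contr_mul_contrMulti, mul_smul_comm, smul_smul,
    ← mul_assoc (wedgeMulti k A), ← pow_add, add_sub_cancel_left]
  by_cases hiA : i ∈ A
  · rw [if_pos hiA, if_pos hiA, smul_mul_assoc]
  · rw [if_neg hiA, if_neg hiA, zero_mul]

theorem rhoMap_apply (z : (Finset (Fin n) × Finset (Fin n)) → k) :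
    rhoMap k z =
      ∑ p : Finset (Fin n) × Finset (Fin n), z p • (wedgeMulti k p.1 * contrMulti k p.2) :=
  rfl

theorem scommOdd_sum {ι : Type*} (D : Module.End k (Finset (Fin n) → k)) (s : Finset ι)
    (f : ι → Module.End k (Finset (Fin n) → k)) :
    scommOdd k D (∑ p ∈ s, f p) = ∑ p ∈ s, scommOdd k D (f p) := by
  simp [scommOdd, Finset.mul_sum, Finset.sum_mul, Finset.sum_sub_distrib]

theorem scommOdd_smul (D : Module.End k (Finset (Fin n) → k)) (c : k)
    (B : Module.End k (Finset (Fin n) → k)) :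
    scommOdd k D (c • B) = c • scommOdd k D B := by
  simp [scommOdd, mul_smul_comm, smul_mul_assoc, smul_sub]

/-- The involution of the index set flipping membership of `i` in the second component. -/
def flipSnd (i : Fin n) :
    (Finset (Fin n) × Finset (Fin n)) ≃ (Finset (Fin n) × Finset (Fin n)) where
  toFun p := (p.1, if i ∈ p.2 then p.2.erase i else insert i p.2)
  invFun p := (p.1, if i ∈ p.2 then p.2.erase i else insert i p.2)
  left_inv p := by
    by_cases h : i ∈ p.2 <;>
      simp [h, Finset.notMem_erase, Finset.mem_insert_self, Finset.insert_erase,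
        Finset.erase_insert]
  right_inv p := by
    by_cases h : i ∈ p.2 <;>
      simp [h, Finset.notMem_erase, Finset.mem_insert_self, Finset.insert_erase,
        Finset.erase_insert]

/-- The involution of the index set flipping membership of `i` in the first component. -/
def flipFst (i : Fin n) :
    (Finset (Fin n) × Finset (Fin n)) ≃ (Finset (Fin n) × Finset (Fin n)) where
  toFun p := (if i ∈ p.1 then p.1.erase i else insert i p.1, p.2)
  invFun p := (if i ∈ p.1 then p.1.erase i else insert i p.1, p.2)
  left_inv p := by
    by_cases h : i ∈ p.1 <;>
      simp [h, Finset.notMem_erase, Finset.mem_insert_self, Finset.insert_erase,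
        Finset.erase_insert]
  right_inv p := by
    by_cases h : i ∈ p.1 <;>
      simp [h, Finset.notMem_erase, Finset.mem_insert_self, Finset.insert_erase,
        Finset.erase_insert]

end Aux

/-- Under the isomorphism `ρ : ⋀ F_ξ ⊗ ⋀ F_ξ^* ≅ End_k(⋀ F_ξ)`, the
contraction `(ξ_i^*)^* ⌟ (−)` on the second tensor factor corresponds to the graded commutator
`[ξ_i ∧ (−), −]`, and the contraction `ξ_i^* ⌟ (−)` on the first tensor factor corresponds to
the graded commutator `[ξ_i^* ⌟ (−), −]`. -/
theorem rho_intertwines_contractions_with_commutators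
    (i : Fin n) (z : (Finset (Fin n) × Finset (Fin n)) → k) :
    rhoMap k (sndContr k i z) = scommOdd k (wedgeOp k i) (rhoMap k z)
    ∧ rhoMap k (fstContr k i z) = scommOdd k (contrOp k i) (rhoMap k z) := by
  constructor
  · rw [rhoMap_apply, rhoMap_apply, scommOdd_sum]
    simp only [scommOdd_smul, scomm_wedge_basis]
    rw [← Equiv.sum_comp (flipSnd i)
      (fun p => sndContr k i z p • (wedgeMulti k p.1 * contrMulti k p.2))]
    refine Finset.sum_congr rfl fun p _ => ?_
    by_cases h : i ∈ p.2
    · simp only [flipSnd, Equiv.coe_fn_mk, sndContr, if_pos h,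
        if_neg (Finset.notMem_erase i p.2), Finset.insert_erase h, ksign_erase_self]
      rw [smul_smul, smul_assoc, smul_comm]
    · simp [flipSnd, sndContr, h, Finset.mem_insert_self]
  · rw [rhoMap_apply, rhoMap_apply, scommOdd_sum]
    simp only [scommOdd_smul, scomm_contr_basis]
    rw [← Equiv.sum_comp (flipFst i)
      (fun p => fstContr k i z p • (wedgeMulti k p.1 * contrMulti k p.2))]
    refine Finset.sum_congr rfl fun p _ => ?_
    by_cases h : i ∈ p.1
    · simp only [flipFst, Equiv.coe_fn_mk, fstContr, if_pos h,
        if_neg (Finset.notMem_erase i p.1), Finset.insert_erase h, ksign_erase_self]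
      rw [smul_assoc, smul_comm]
    · simp [flipFst, fstContr, h, Finset.mem_insert_self]

end Stmt3
end
end

section
/- Let t_1,...,t_n be a quasi-regular sequence in a commutative k-algebra R with I = (t_1,...,t_n). Then any k-linear section σ of the quotient map R → R/I induces an isomorphism of k⟦z_1,...,z_n⟧-modules σ_t: R/I ⊗_k k⟦z_1,...,z_n⟧ → R̂, where R̂ is the I-adic completion and z_i acts on R̂ as multiplication by t_i. Concretely, every element r of R̂ admits a unique representation r = ∑_{M ∈ ℕ^n} σ(r_M) t^M with r_M ∈ R/I. -/
noncomputable section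
namespace Stmt5

/-- A sequence `t_1, …, t_n` in a commutative ring `R` is *quasi-regular* if, with
`I = (t_1,…,t_n)`, the canonical map `(R/I)[z_1,…,z_n] → gr_I R` is an isomorphism;
equivalently (the formulation used here, cf. Stacks 10.69): whenever a homogeneous degree-`m`
polynomial expression `∑_{|M|=m} a_M t^M` lies in `I^{m+1}`, all coefficients `a_M` lie in `I`. -/
def IsQuasiRegular {R : Type*} [CommRing R] {n : ℕ} (t : Fin n → R) : Prop :=
  ∀ (m : ℕ) (s : Finset (Fin n → ℕ)) (a : (Fin n → ℕ) → R),
    (∀ M ∈ s, ∑ i, M i = m) →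
    (∑ M ∈ s, a M * ∏ i, t i ^ M i) ∈ (Ideal.span (Set.range t)) ^ (m + 1) →
    ∀ M ∈ s, a M ∈ Ideal.span (Set.range t)

/-- The finite set of multi-indices `M ∈ ℕ^n` with `|M| < m`. -/
def degLT (n m : ℕ) : Finset (Fin n → ℕ) :=
  ((Finset.univ : Finset (Fin n → Fin (m + 1))).image
      (fun M i => (M i : ℕ))).filter (fun M => ∑ i, M i < m)

section Aux
variable {R : Type*} [CommRing R] {n : ℕ} (t : Fin n → R)

/-- Monomials of degree `m` lie in `I^m`. -/
lemma mono_mem {M : Fin n → ℕ} {m : ℕ} (h : ∑ i, M i = m) :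
    ∏ i, t i ^ M i ∈ (Ideal.span (Set.range t)) ^ m := by
  subst h
  have : ∀ s : Finset (Fin n), ∏ i ∈ s, t i ^ M i ∈ (Ideal.span (Set.range t)) ^ (∑ i ∈ s, M i) := by
    intro s
    induction s using Finset.induction with
    | empty => simp [Ideal.one_eq_top]
    | insert _ _ h ih =>
        rw [Finset.prod_insert h, Finset.sum_insert h, pow_add]
        exact Submodule.mul_mem_mul
          (Ideal.pow_mem_pow (Ideal.subset_span (Set.mem_range_self _)) _) ih
  exact this Finset.univ

lemma monomial_mul_single {M : Fin n → ℕ} (i : Fin n) :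
    (∏ j, t j ^ M j) * t i = ∏ j, t j ^ ((M + (Pi.single i 1 : Fin n → ℕ)) j) := by
  simp only [Pi.add_apply, pow_add, Finset.prod_mul_distrib]
  congr 1
  rw [Finset.prod_eq_single i (fun j _ hj => by simp [Pi.single_eq_of_ne hj]) (by simp)]
  simp

lemma pow_le_span_monomials (m : ℕ) :
    (Ideal.span (Set.range t)) ^ m ≤
      Ideal.span ((fun M : Fin n → ℕ => ∏ i, t i ^ M i) '' {M | ∑ i, M i = m}) := by
  induction m with
  | zero =>
      rw [pow_zero, Ideal.one_eq_top, top_le_iff, Ideal.eq_top_iff_one]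
      exact Ideal.subset_span ⟨0, by simp, by simp⟩
  | succ m ih =>
      rw [pow_succ]
      calc (Ideal.span (Set.range t)) ^ m * Ideal.span (Set.range t)
          ≤ Ideal.span ((fun M : Fin n → ℕ => ∏ i, t i ^ M i) '' {M | ∑ i, M i = m}) *
              Ideal.span (Set.range t) := Ideal.mul_mono_left ih
        _ ≤ _ := by
            rw [Ideal.span_mul_span']
            rw [Ideal.span_le]
            rintro z ⟨x, ⟨M, hM, rfl⟩, y, ⟨i, rfl⟩, rfl⟩
            refine Ideal.subset_span ⟨M + (Pi.single i 1 : Fin n → ℕ), ?_, (monomial_mul_single t i).symm⟩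
            simp only [Set.mem_setOf_eq] at hM ⊢
            simp [Finset.sum_add_distrib, hM, Finset.sum_pi_single']

/-- Every element of `I^m` is a finite combination of degree-`m` monomials. -/
lemma mem_pow_exists_sum {m : ℕ} {x : R} (hx : x ∈ (Ideal.span (Set.range t)) ^ m) :
    ∃ (s : Finset (Fin n → ℕ)) (a : (Fin n → ℕ) → R),
      (∀ M ∈ s, ∑ i, M i = m) ∧ x = ∑ M ∈ s, a M * ∏ i, t i ^ M i := by
  have hx' := pow_le_span_monomials t m hx
  rw [Ideal.span, Submodule.mem_span_set] at hx'
  obtain ⟨c, hsupp, hsum⟩ := hx'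
  classical
  let g : R → (Fin n → ℕ) := fun y =>
    if h : ∃ M : Fin n → ℕ, (∑ i, M i = m) ∧ (∏ i, t i ^ M i) = y then h.choose else 0
  have hg : ∀ y ∈ c.support, (∑ i, g y i = m) ∧ (∏ i, t i ^ g y i) = y := by
    intro y hy
    obtain ⟨M, hM, hTM⟩ := hsupp hy
    have hex : ∃ M : Fin n → ℕ, (∑ i, M i = m) ∧ (∏ i, t i ^ M i) = y := ⟨M, hM, hTM⟩
    simpa only [g, dif_pos hex] using hex.choose_spec
  have hginj : Set.InjOn g c.support := by
    intro y hy y' hy' hgy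
    rw [← (hg y hy).2, ← (hg y' hy').2, hgy]
  refine ⟨c.support.image g, fun M => c (∏ i, t i ^ M i), ?_, ?_⟩
  · intro M hM
    obtain ⟨y, hy, rfl⟩ := Finset.mem_image.mp hM
    exact (hg y hy).1
  · rw [Finset.sum_image (fun y hy y' hy' h => hginj hy hy' h)]
    rw [← hsum, Finsupp.sum]
    refine Finset.sum_congr rfl fun y hy => ?_
    simp only [smul_eq_mul]
    rw [(hg y hy).2, mul_comm]

lemma smul_top_eq (m : ℕ) (J : Ideal R) :
    (J ^ m • (⊤ : Submodule R R)) = J ^ m := by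
  rw [← Ideal.one_eq_top, Ideal.smul_eq_mul, mul_one]

/-- `eval` kills `I^m • ⊤`. -/
lemma eval_zero_of_mem_smul {I : Ideal R} {m : ℕ} {q : AdicCompletion I R}
    (hq : q ∈ (I ^ m • ⊤ : Submodule R (AdicCompletion I R))) :
    AdicCompletion.eval I R m q = 0 := by
  refine Submodule.smul_induction_on hq (fun r hr y _ => ?_) (fun x y hx hy => by
    rw [map_add, hx, hy, add_zero])
  obtain ⟨z, hz⟩ := Submodule.Quotient.mk_surjective (I ^ m • ⊤ : Submodule R R)
    (AdicCompletion.eval I R m y)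
  rw [map_smul, ← hz, ← Submodule.Quotient.mk_smul, Submodule.Quotient.mk_eq_zero,
    smul_top_eq, smul_eq_mul]
  exact Ideal.mul_mem_right _ _ hr

/-- `of x ∈ I^m • ⊤` implies `x ∈ I^m`. -/
lemma mem_pow_of_of_mem_smul {I : Ideal R} {m : ℕ} {x : R}
    (hx : AdicCompletion.of I R x ∈ (I ^ m • ⊤ : Submodule R (AdicCompletion I R))) :
    x ∈ I ^ m := by
  have := eval_zero_of_mem_smul hx
  rw [AdicCompletion.eval_of, Submodule.mkQ_apply, Submodule.Quotient.mk_eq_zero,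
    smul_top_eq] at this
  exact this

/-- Elements of `I^(m+1)` can be written `∑ tᵢ bᵢ` with `bᵢ ∈ I^m`. -/
lemma mem_pow_succ_exists {m : ℕ} {z : R} (hz : z ∈ (Ideal.span (Set.range t)) ^ (m + 1)) :
    ∃ b : Fin n → R, (∀ i, b i ∈ (Ideal.span (Set.range t)) ^ m) ∧ z = ∑ i, t i * b i := by
  rw [pow_succ] at hz
  refine Submodule.mul_induction_on hz (fun x hx y hy => ?_) (fun x y hx hy => ?_)
  · obtain ⟨c, hc⟩ := (Submodule.mem_span_range_iff_exists_fun R).mp hy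
    refine ⟨fun i => c i * x, fun i => Ideal.mul_mem_left _ _ hx, ?_⟩
    rw [← hc, Finset.mul_sum]
    exact Finset.sum_congr rfl fun i _ => by rw [smul_eq_mul]; ring
  · obtain ⟨b, hb, rfl⟩ := hx
    obtain ⟨b', hb', rfl⟩ := hy
    exact ⟨b + b', fun i => Ideal.add_mem _ (hb i) (hb' i), by
      rw [← Finset.sum_add_distrib]
      exact Finset.sum_congr rfl fun i _ => by rw [Pi.add_apply, mul_add]⟩

lemma mem_degLT {m : ℕ} {M : Fin n → ℕ} : M ∈ degLT n m ↔ ∑ i, M i < m := by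
  unfold degLT
  rw [Finset.mem_filter, Finset.mem_image]
  constructor
  · exact fun h => h.2
  · intro h
    refine ⟨⟨fun i => ⟨M i, ?_⟩, Finset.mem_univ _, rfl⟩, h⟩
    have : M i ≤ ∑ j, M j := Finset.single_le_sum (fun j _ => Nat.zero_le _) (Finset.mem_univ i)
    omega

/-- Elements of the completion with vanishing first component lie in `I • ⊤`. -/
lemma mem_smul_top_of_eval_one {w : AdicCompletion (Ideal.span (Set.range t)) R}
    (hw : AdicCompletion.eval (Ideal.span (Set.range t)) R 1 w = 0) :
    w ∈ ((Ideal.span (Set.range t)) • ⊤ :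
      Submodule R (AdicCompletion (Ideal.span (Set.range t)) R)) := by
  obtain ⟨f, hf⟩ := AdicCompletion.mk_surjective (Ideal.span (Set.range t)) R w
  subst hf
  -- the base case: `f 1 ∈ I`
  have hbase : (f : ℕ → R) 1 - ∑ i, t i * (0 : R) ∈ (Ideal.span (Set.range t)) ^ (0 + 1) := by
    have h1 : AdicCompletion.eval (Ideal.span (Set.range t)) R 1
        (AdicCompletion.mk (Ideal.span (Set.range t)) R f) =
        Submodule.Quotient.mk ((f : ℕ → R) 1) := rfl
    rw [h1, Submodule.Quotient.mk_eq_zero, smul_top_eq] at hw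
    simpa using hw
  -- the recursion step
  have key : ∀ (m : ℕ) (v : Fin n → R),
      (f : ℕ → R) (m + 1) - ∑ i, t i * v i ∈ (Ideal.span (Set.range t)) ^ (m + 1) →
      ∃ u : Fin n → R, (∀ i, u i - v i ∈ (Ideal.span (Set.range t)) ^ m) ∧
        (f : ℕ → R) (m + 2) - ∑ i, t i * u i ∈ (Ideal.span (Set.range t)) ^ (m + 2) := by
    intro m v hv
    have hz : (f : ℕ → R) (m + 2) - ∑ i, t i * v i ∈ (Ideal.span (Set.range t)) ^ (m + 1) := by
      have hcauchy := f.property (Nat.le_succ (m + 1))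
      rw [SModEq.sub_mem, smul_top_eq] at hcauchy
      have hc : (f : ℕ → R) (m + 2) - (f : ℕ → R) (m + 1) ∈
          (Ideal.span (Set.range t)) ^ (m + 1) := by
        simpa [neg_sub] using ((Ideal.span (Set.range t)) ^ (m + 1)).neg_mem hcauchy
      have := Ideal.add_mem _ hc hv
      simpa [sub_add_sub_cancel] using this
    obtain ⟨b, hb, hzb⟩ := mem_pow_succ_exists t hz
    refine ⟨v + b, fun i => by simpa using hb i, ?_⟩
    have hsum : ∑ i, t i * (v + b) i = ∑ i, t i * v i + ∑ i, t i * b i := by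
      rw [← Finset.sum_add_distrib]
      exact Finset.sum_congr rfl fun i _ => by rw [Pi.add_apply, mul_add]
    rw [hsum, ← hzb]
    simp
  choose F hF1 hF2 using key
  -- construct the approximating sequences by recursion
  let A : ∀ m : ℕ, {v : Fin n → R //
      (f : ℕ → R) (m + 1) - ∑ i, t i * v i ∈ (Ideal.span (Set.range t)) ^ (m + 1)} :=
    fun m => Nat.rec ⟨0, hbase⟩ (fun m p => ⟨F m p.1 p.2, (hF2 m p.1 p.2)⟩) m
  have hAdiff : ∀ m i, (A (m + 1)).1 i - (A m).1 i ∈ (Ideal.span (Set.range t)) ^ m := by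
    intro m i
    have : (A (m + 1)).1 = F m (A m).1 (A m).2 := rfl
    rw [this]; exact hF1 m (A m).1 (A m).2 i
  -- each coordinate gives a Cauchy sequence
  have hcauchy : ∀ i : Fin n, AdicCompletion.IsAdicCauchy (Ideal.span (Set.range t)) R
      (fun m => (A m).1 i) := by
    intro i
    rw [AdicCompletion.isAdicCauchy_iff]
    intro m
    rw [SModEq.sub_mem, smul_top_eq]
    simpa [neg_sub] using ((Ideal.span (Set.range t)) ^ m).neg_mem (hAdiff m i)
  set u : Fin n → AdicCompletion (Ideal.span (Set.range t)) R := fun i =>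
    AdicCompletion.mk (Ideal.span (Set.range t)) R ⟨fun m => (A m).1 i, hcauchy i⟩ with hu
  have hrepr : AdicCompletion.mk (Ideal.span (Set.range t)) R f = ∑ i, t i • u i := by
    ext m
    rw [AdicCompletion.val_sum]
    have hL : (AdicCompletion.mk (Ideal.span (Set.range t)) R f).val m =
        Submodule.Quotient.mk ((f : ℕ → R) m) := rfl
    have hRi : ∀ i : Fin n, (t i • u i).val m =
        Submodule.Quotient.mk (t i * (A m).1 i) := by
      intro i
      rw [AdicCompletion.val_smul]
      rfl
    rw [hL]
    rw [Finset.sum_apply, Finset.sum_congr rfl (fun i _ => hRi i)]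
    simp only [← Submodule.mkQ_apply, ← map_sum]
    rw [Submodule.mkQ_apply, Submodule.mkQ_apply]
    refine (Submodule.Quotient.eq _).mpr ?_
    rw [smul_top_eq]
    have h1 : (f : ℕ → R) m - (f : ℕ → R) (m + 1) ∈ (Ideal.span (Set.range t)) ^ m := by
      have := f.property (Nat.le_succ m)
      rw [SModEq.sub_mem, smul_top_eq] at this
      exact this
    have h2 : (f : ℕ → R) (m + 1) - ∑ i, t i * (A m).1 i ∈ (Ideal.span (Set.range t)) ^ m :=
      Ideal.pow_le_pow_right (Nat.le_succ m) (A m).2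
    simpa [sub_add_sub_cancel] using Ideal.add_mem _ h1 h2
  rw [hrepr]
  exact Submodule.sum_mem _ fun i _ =>
    Submodule.smul_mem_smul (Ideal.subset_span (Set.mem_range_self i)) trivial

/-- Decomposition of elements of `I^m • ⊤` in the completion into monomial pieces. -/
lemma mem_smul_top_exists_sum (m : ℕ) (x : AdicCompletion (Ideal.span (Set.range t)) R)
    (hx : x ∈ ((Ideal.span (Set.range t)) ^ m • ⊤ :
      Submodule R (AdicCompletion (Ideal.span (Set.range t)) R))) :
    ∃ (s : Finset (Fin n → ℕ)) (v : (Fin n → ℕ) → AdicCompletion (Ideal.span (Set.range t)) R),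
      (∀ M ∈ s, ∑ i, M i = m) ∧ x = ∑ M ∈ s, (∏ i, t i ^ M i) • v M := by
  classical
  refine Submodule.smul_induction_on hx (fun r hr y _ => ?_) ?_
  · obtain ⟨s, a, hdeg, hra⟩ := mem_pow_exists_sum t hr
    refine ⟨s, fun M => a M • y, hdeg, ?_⟩
    rw [hra, Finset.sum_smul]
    exact Finset.sum_congr rfl fun M _ => by rw [mul_comm, mul_smul]
  · rintro x y ⟨s, v, hdeg, rfl⟩ ⟨s', v', hdeg', rfl⟩
    refine ⟨s ∪ s', fun M => (if M ∈ s then v M else 0) + (if M ∈ s' then v' M else 0), ?_, ?_⟩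
    · intro M hM
      rcases Finset.mem_union.mp hM with h | h
      exacts [hdeg M h, hdeg' M h]
    · simp only [smul_add, Finset.sum_add_distrib]
      congr 1
      · rw [← Finset.sum_subset Finset.subset_union_left
          (fun M _ hM => by rw [if_neg hM, smul_zero])]
        exact Finset.sum_congr rfl fun M hM => by rw [if_pos hM]
      · rw [← Finset.sum_subset Finset.subset_union_right
          (fun M _ hM => by rw [if_neg hM, smul_zero])]
        exact Finset.sum_congr rfl fun M hM => by rw [if_pos hM]

lemma degOne_eq : ((Ideal.span (Set.range t)) ^ 1 • (⊤ : Submodule R R)) =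
    Ideal.span (Set.range t) := by
  rw [smul_top_eq, pow_one]

/-- Reduction of an element of the completion modulo `I`. -/
def rho : AdicCompletion (Ideal.span (Set.range t)) R →ₗ[R] R ⧸ (Ideal.span (Set.range t)) :=
  (Submodule.quotEquivOfEq _ _ (degOne_eq t)).toLinearMap ∘ₗ
    AdicCompletion.eval (Ideal.span (Set.range t)) R 1

lemma rho_of (x : R) :
    rho t (AdicCompletion.of (Ideal.span (Set.range t)) R x) =
      Ideal.Quotient.mk (Ideal.span (Set.range t)) x := by
  simp [rho, AdicCompletion.eval_of]
  rfl

/-- The key approximation: `w - of (σ (ρ w)) ∈ I • ⊤`. -/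
lemma sub_of_sigma_rho_mem {k : Type*} [CommRing k] [Algebra k R]
    (σ : (R ⧸ Ideal.span (Set.range t)) →ₗ[k] R)
    (hσ : ∀ x, Ideal.Quotient.mk (Ideal.span (Set.range t)) (σ x) = x)
    (w : AdicCompletion (Ideal.span (Set.range t)) R) :
    w - AdicCompletion.of (Ideal.span (Set.range t)) R (σ (rho t w)) ∈
      ((Ideal.span (Set.range t)) • ⊤ :
        Submodule R (AdicCompletion (Ideal.span (Set.range t)) R)) := by
  apply mem_smul_top_of_eval_one t
  have : rho t (w - AdicCompletion.of (Ideal.span (Set.range t)) R (σ (rho t w))) = 0 := by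
    rw [map_sub, rho_of, hσ, sub_self]
  have h0 : (Submodule.quotEquivOfEq _ _ (degOne_eq t))
      (AdicCompletion.eval (Ideal.span (Set.range t)) R 1
        (w - AdicCompletion.of (Ideal.span (Set.range t)) R (σ (rho t w)))) = 0 := this
  exact (Submodule.quotEquivOfEq _ _ (degOne_eq t)).injective (by rw [h0, map_zero])

end Aux

variable {k R : Type*} [CommRing k] [Algebra ℚ k] [CommRing R] [Algebra k R]
  {n : ℕ} (t : Fin n → R)

/-- `c : ℕ^n → R/I` is the family of coefficients of a power series representation
`r = ∑_{M ∈ ℕ^n} σ(c_M) t^M` of an element `r` of the `I`-adic completion `R̂`: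
for every `m`, the difference between `r` and the partial sum over `|M| < m` lies in
`I^m·R̂`. -/
def IsExpansion (σ : (R ⧸ Ideal.span (Set.range t)) →ₗ[k] R)
    (r : AdicCompletion (Ideal.span (Set.range t)) R)
    (c : (Fin n → ℕ) → R ⧸ Ideal.span (Set.range t)) : Prop :=
  ∀ m : ℕ,
    r - AdicCompletion.of (Ideal.span (Set.range t)) R
        (∑ M ∈ degLT n m, σ (c M) * ∏ i, t i ^ M i)
      ∈ ((Ideal.span (Set.range t)) ^ m •
          (⊤ : Submodule R (AdicCompletion (Ideal.span (Set.range t)) R)))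

/-- The partial (single-`m`) version of `IsExpansion`. -/
def Approx (σ : (R ⧸ Ideal.span (Set.range t)) →ₗ[k] R)
    (r : AdicCompletion (Ideal.span (Set.range t)) R) (m : ℕ)
    (c : (Fin n → ℕ) → R ⧸ Ideal.span (Set.range t)) : Prop :=
  r - AdicCompletion.of (Ideal.span (Set.range t)) R
      (∑ M ∈ degLT n m, σ (c M) * ∏ i, t i ^ M i)
    ∈ ((Ideal.span (Set.range t)) ^ m •
        (⊤ : Submodule R (AdicCompletion (Ideal.span (Set.range t)) R)))

lemma filter_degLT (m : ℕ) :
    (degLT n (m + 1)).filter (fun M => ∑ i, M i < m) = degLT n m := by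
  ext M
  rw [Finset.mem_filter, mem_degLT, mem_degLT]
  omega

lemma approx_step (σ : (R ⧸ Ideal.span (Set.range t)) →ₗ[k] R)
    (hσ : ∀ x, Ideal.Quotient.mk (Ideal.span (Set.range t)) (σ x) = x)
    (r : AdicCompletion (Ideal.span (Set.range t)) R) (m : ℕ)
    (c : (Fin n → ℕ) → R ⧸ Ideal.span (Set.range t)) (hc : Approx t σ r m c) :
    ∃ c', Approx t σ r (m + 1) c' ∧ ∀ M, (∑ i, M i ≠ m) → c' M = c M := by
  classical
  obtain ⟨s, v, hdeg, hsum⟩ := mem_smul_top_exists_sum t m _ hc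
  set c' : (Fin n → ℕ) → R ⧸ Ideal.span (Set.range t) := fun M =>
    if ∑ i, M i = m then (if M ∈ s then rho t (v M) else 0) else c M with hc'def
  refine ⟨c', ?_, fun M hM => by rw [hc'def]; exact if_neg hM⟩
  unfold Approx
  -- split the sum over degLT n (m+1)
  have hsplit := Finset.sum_filter_add_sum_filter_not (degLT n (m + 1))
    (fun M => ∑ i, M i < m) (fun M => σ (c' M) * ∏ i, t i ^ M i)
  rw [filter_degLT] at hsplit
  -- on degLT n m the coefficients agree
  have hlow : ∑ M ∈ degLT n m, σ (c' M) * ∏ i, t i ^ M i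
      = ∑ M ∈ degLT n m, σ (c M) * ∏ i, t i ^ M i := by
    refine Finset.sum_congr rfl fun M hM => ?_
    have : ∑ i, M i < m := mem_degLT.mp hM
    rw [hc'def]
    simp only [if_neg (Nat.ne_of_lt this)]
  -- the high part reduces to a sum over s
  have hsub : s ⊆ (degLT n (m + 1)).filter (fun M => ¬ ∑ i, M i < m) := by
    intro M hM
    rw [Finset.mem_filter, mem_degLT]
    have := hdeg M hM
    omega
  have hhigh : ∑ M ∈ (degLT n (m + 1)).filter (fun M => ¬ ∑ i, M i < m),
      σ (c' M) * ∏ i, t i ^ M i = ∑ M ∈ s, σ (rho t (v M)) * ∏ i, t i ^ M i := by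
    rw [← Finset.sum_subset hsub (fun M hME hMs => ?_)]
    · refine Finset.sum_congr rfl fun M hM => ?_
      rw [hc'def]
      simp only [if_pos (hdeg M hM), if_pos hM]
    · rw [hc'def]
      have hd : ∑ i, M i = m := by
        rw [Finset.mem_filter, mem_degLT] at hME
        omega
      simp only [if_pos hd, if_neg hMs, map_zero, zero_mul]
  rw [← hsplit, hlow, hhigh, map_add]
  have h1 : ∀ M, AdicCompletion.of (Ideal.span (Set.range t)) R
      (σ (rho t (v M)) * ∏ i, t i ^ M i)
      = (∏ i, t i ^ M i) • AdicCompletion.of (Ideal.span (Set.range t)) R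
          (σ (rho t (v M))) := by
    intro M
    rw [← map_smul]
    congr 1
    rw [smul_eq_mul, mul_comm]
  have h2 : AdicCompletion.of (Ideal.span (Set.range t)) R
      (∑ M ∈ s, σ (rho t (v M)) * ∏ i, t i ^ M i)
      = ∑ M ∈ s, (∏ i, t i ^ M i) • AdicCompletion.of (Ideal.span (Set.range t)) R
          (σ (rho t (v M))) := by
    rw [map_sum]
    exact Finset.sum_congr rfl fun M _ => h1 M
  have hdiff : r - (AdicCompletion.of (Ideal.span (Set.range t)) R
        (∑ M ∈ degLT n m, σ (c M) * ∏ i, t i ^ M i)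
      + AdicCompletion.of (Ideal.span (Set.range t)) R
          (∑ M ∈ s, σ (rho t (v M)) * ∏ i, t i ^ M i))
      = ∑ M ∈ s, (∏ i, t i ^ M i) •
          (v M - AdicCompletion.of (Ideal.span (Set.range t)) R (σ (rho t (v M)))) := by
    rw [h2, sub_add_eq_sub_sub, hsum, ← Finset.sum_sub_distrib]
    exact Finset.sum_congr rfl fun M _ => (smul_sub _ _ _).symm
  rw [hdiff]
  refine Submodule.sum_mem _ fun M hM => ?_
  have hrw : ((Ideal.span (Set.range t)) ^ (m + 1) •
      (⊤ : Submodule R (AdicCompletion (Ideal.span (Set.range t)) R)))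
      = (Ideal.span (Set.range t)) ^ m • ((Ideal.span (Set.range t)) •
        (⊤ : Submodule R (AdicCompletion (Ideal.span (Set.range t)) R))) := by
    rw [pow_succ, ← Ideal.smul_eq_mul, Submodule.smul_assoc]
  rw [hrw]
  exact Submodule.smul_mem_smul (mono_mem t (hdeg M hM)) (sub_of_sigma_rho_mem t σ hσ (v M))

lemma exists_expansion (σ : (R ⧸ Ideal.span (Set.range t)) →ₗ[k] R)
    (hσ : ∀ x, Ideal.Quotient.mk (Ideal.span (Set.range t)) (σ x) = x)
    (r : AdicCompletion (Ideal.span (Set.range t)) R) :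
    ∃ c, IsExpansion t σ r c := by
  have hbase : Approx t σ r 0 (fun _ => (0 : R ⧸ Ideal.span (Set.range t))) := by
    unfold Approx
    have hempty : degLT n 0 = ∅ :=
      Finset.eq_empty_of_forall_notMem fun M hM => by
        have := mem_degLT.mp hM; omega
    rw [hempty, Finset.sum_empty, map_zero, sub_zero, pow_zero, Ideal.one_eq_top,
      Submodule.top_smul]
    trivial
  choose F hF1 hF2 using approx_step t σ hσ r
  let S : ∀ m : ℕ, {c : (Fin n → ℕ) → R ⧸ Ideal.span (Set.range t) // Approx t σ r m c} :=
    fun m => Nat.rec ⟨fun _ => 0, hbase⟩ (fun m p => ⟨F m p.1 p.2, hF1 m p.1 p.2⟩) m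
  have hS : ∀ m M, (∑ i, M i ≠ m) → (S (m + 1)).1 M = (S m).1 M := by
    intro m M h
    have : (S (m + 1)).1 = F m (S m).1 (S m).2 := rfl
    rw [this]
    exact hF2 m (S m).1 (S m).2 M h
  have hstab : ∀ m M, (∑ i, M i < m) → (S m).1 M = (S (∑ i, M i + 1)).1 M := by
    intro m
    induction m with
    | zero => intro M h; omega
    | succ m ih =>
        intro M h
        by_cases hd : ∑ i, M i = m
        · rw [hd]
        · rw [hS m M hd]
          exact ih M (by omega)
  refine ⟨fun M => (S (∑ i, M i + 1)).1 M, fun m => ?_⟩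
  have hsum : ∑ M ∈ degLT n m, σ ((S (∑ i, M i + 1)).1 M) * ∏ i, t i ^ M i
      = ∑ M ∈ degLT n m, σ ((S m).1 M) * ∏ i, t i ^ M i := by
    refine Finset.sum_congr rfl fun M hM => ?_
    rw [← hstab m M (mem_degLT.mp hM)]
  simp only []
  rw [hsum]
  exact (S m).2

lemma expansion_unique (hqr : IsQuasiRegular t)
    (σ : (R ⧸ Ideal.span (Set.range t)) →ₗ[k] R)
    (hσ : ∀ x, Ideal.Quotient.mk (Ideal.span (Set.range t)) (σ x) = x)
    (r : AdicCompletion (Ideal.span (Set.range t)) R)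
    {c c' : (Fin n → ℕ) → R ⧸ Ideal.span (Set.range t)}
    (hc : IsExpansion t σ r c) (hc' : IsExpansion t σ r c') : c = c' := by
  funext M0
  suffices h : ∀ j (M : Fin n → ℕ), ∑ i, M i = j → c M = c' M from h _ M0 rfl
  intro j
  induction j using Nat.strong_induction_on with
  | _ j ih =>
    intro M hM
    -- the difference of the two partial sums of degree < j+1 lies in I^(j+1)
    have hmem0 : AdicCompletion.of (Ideal.span (Set.range t)) R
        ((∑ M ∈ degLT n (j + 1), σ (c M) * ∏ i, t i ^ M i)
          - ∑ M ∈ degLT n (j + 1), σ (c' M) * ∏ i, t i ^ M i)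
        ∈ ((Ideal.span (Set.range t)) ^ (j + 1) •
            (⊤ : Submodule R (AdicCompletion (Ideal.span (Set.range t)) R))) := by
      have h3 := Submodule.sub_mem _ (hc' (j + 1)) (hc (j + 1))
      rw [map_sub]
      have h4 : (r - AdicCompletion.of (Ideal.span (Set.range t)) R
            (∑ M ∈ degLT n (j + 1), σ (c' M) * ∏ i, t i ^ M i))
          - (r - AdicCompletion.of (Ideal.span (Set.range t)) R
            (∑ M ∈ degLT n (j + 1), σ (c M) * ∏ i, t i ^ M i))
          = AdicCompletion.of (Ideal.span (Set.range t)) R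
              (∑ M ∈ degLT n (j + 1), σ (c M) * ∏ i, t i ^ M i)
            - AdicCompletion.of (Ideal.span (Set.range t)) R
              (∑ M ∈ degLT n (j + 1), σ (c' M) * ∏ i, t i ^ M i) := by abel
      rwa [h4] at h3
    have hx : (∑ M ∈ degLT n (j + 1), σ (c M) * ∏ i, t i ^ M i)
        - (∑ M ∈ degLT n (j + 1), σ (c' M) * ∏ i, t i ^ M i)
        ∈ (Ideal.span (Set.range t)) ^ (j + 1) := by
      exact mem_pow_of_of_mem_smul hmem0
    -- rewrite the difference as a sum of σ (c M - c' M) * monomial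
    have hdiff : (∑ M ∈ degLT n (j + 1), σ (c M) * ∏ i, t i ^ M i)
        - (∑ M ∈ degLT n (j + 1), σ (c' M) * ∏ i, t i ^ M i)
        = ∑ M ∈ degLT n (j + 1), σ (c M - c' M) * ∏ i, t i ^ M i := by
      rw [← Finset.sum_sub_distrib]
      exact Finset.sum_congr rfl fun M _ => by rw [map_sub, sub_mul]
    rw [hdiff] at hx
    -- terms of degree < j vanish by the induction hypothesis
    have hsplit := Finset.sum_filter_add_sum_filter_not (degLT n (j + 1))
      (fun M => ∑ i, M i < j) (fun M => σ (c M - c' M) * ∏ i, t i ^ M i)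
    rw [filter_degLT] at hsplit
    have hlow : ∑ M ∈ degLT n j, σ (c M - c' M) * ∏ i, t i ^ M i = 0 := by
      refine Finset.sum_eq_zero fun M hM => ?_
      have := ih _ (mem_degLT.mp hM) M rfl
      rw [this, sub_self, map_zero, zero_mul]
    have hx' : ∑ M ∈ (degLT n (j + 1)).filter (fun M => ¬ ∑ i, M i < j),
        σ (c M - c' M) * ∏ i, t i ^ M i ∈ (Ideal.span (Set.range t)) ^ (j + 1) := by
      rw [← hsplit, hlow, zero_add] at hx
      exact hx
    -- apply quasi-regularity
    have hME : M ∈ (degLT n (j + 1)).filter (fun M => ¬ ∑ i, M i < j) := by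
      rw [Finset.mem_filter, mem_degLT]
      omega
    have hsig := hqr j _ (fun M => σ (c M - c' M))
      (fun M hMf => by
        rw [Finset.mem_filter, mem_degLT] at hMf
        omega) hx' M hME
    have h5 := hσ (c M - c' M)
    rw [Ideal.Quotient.eq_zero_iff_mem.mpr hsig] at h5
    have := h5.symm
    rw [sub_eq_zero] at this
    exact this

/-- Let `t_1,…,t_n` be a quasi-regular sequence in a commutative `k`-algebra
`R`, `I = (t_1,…,t_n)`, and let `σ : R/I → R` be any `k`-linear section of the quotient map.
Then every element `r` of the `I`-adic completion `R̂` admits a *unique* representation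
`r = ∑_{M ∈ ℕ^n} σ(r_M) t^M` with coefficients `r_M ∈ R/I`; equivalently, `σ` induces an
isomorphism of `k⟦z_1,…,z_n⟧`-modules `R/I ⊗_k k⟦z_1,…,z_n⟧ ≅ R̂`. -/
theorem unique_power_series_representation
    (hqr : IsQuasiRegular t)
    (σ : (R ⧸ Ideal.span (Set.range t)) →ₗ[k] R)
    (hσ : ∀ x, Ideal.Quotient.mk (Ideal.span (Set.range t)) (σ x) = x)
    (r : AdicCompletion (Ideal.span (Set.range t)) R) :
    ∃! c : (Fin n → ℕ) → R ⧸ Ideal.span (Set.range t), IsExpansion t σ r c := by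
  obtain ⟨c, hc⟩ := exists_expansion t σ hσ r
  exact ⟨c, hc, fun y hy => expansion_unique t hqr σ hσ r hy hc⟩

end Stmt5
end
end

section
/- Composition of Hom-spaces under ν is computed by contraction-and-projection: the composition map Hom_k(⋀F_η, ⋀F_ε) ⊗ Hom_k(⋀F_ξ, ⋀F_η) → Hom_k(⋀F_ξ, ⋀F_ε) corresponds, under ν ⊗ ν on the source and ν on the target, to the map P ∘ exp(∑_i η_i* ⊗ η̄_i*) from (⋀F_ε ⊗ ⋀F_η*) ⊗ (⋀F_η ⊗ ⋀F_ξ*) to ⋀F_ε ⊗ ⋀F_ξ*, where the operator η_i* contracts in the ⋀F_η* factor, η̄_i* contracts in the ⋀F_η factor, and P is the projection onto the subspace with no η's or η̄'s. -/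
noncomputable section
namespace Stmt15

/- `⋀F_ξ, ⋀F_η, ⋀F_ε` (free odd generators `ξ_1..ξ_r`, `η_1..η_s`, `ε_1..ε_t`) are modelled
as the free `k`-modules on subsets, and `(⋀F_ε ⊗ ⋀F_η^*) ⊗ (⋀F_η ⊗ ⋀F_ξ^*)` as the free
`k`-module on quadruples of subsets.  The isomorphism `ν` and the coupling operator
`∑_i η_i^* ⊗ η̄_i^*` (removing an `η̄_i` from the `⋀F_η^*` factor and an `η_i` from the
`⋀F_η` factor, with Koszul signs) are as in the paper. -/

def ksign {n : ℕ} (i : Fin n) (S : Finset (Fin n)) : ℤ :=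
  (-1) ^ (S.filter (fun j => j < i)).card

variable (k : Type*) [CommRing k] [Algebra ℚ k] {r s t : ℕ}

/-- `ν : Hom_k(⋀F, ⋀G) → ⋀G ⊗ ⋀F^*`,
`ν(φ) = ∑_{p≥0} ∑_{i_1<⋯<i_p} (−1)^{p(p−1)/2} φ(f_{i_1}⋯f_{i_p}) ⊗ f_{i_1}^*∧⋯∧f_{i_p}^*`. -/
def nuG {a b : ℕ} (φ : (Finset (Fin a) → k) →ₗ[k] (Finset (Fin b) → k)) :
    (Finset (Fin b) × Finset (Fin a)) → k := fun p =>
  ((-1 : ℤ) ^ Nat.choose p.2.card 2) • φ (Pi.single p.2 1) p.1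

/-- The index type of the monomial basis of `(⋀F_ε ⊗ ⋀F_η^*) ⊗ (⋀F_η ⊗ ⋀F_ξ^*)`. -/
abbrev BigIndex (r s t : ℕ) :=
  (Finset (Fin t) × Finset (Fin s)) × (Finset (Fin s) × Finset (Fin r))

/-- The summand `η_i^* ⊗ η̄_i^*` of the coupling operator: it removes `η̄_i` from the
`⋀F_η^*` factor and `η_i` from the `⋀F_η` factor, with the appropriate Koszul signs. -/
def couplingOp (i : Fin s) : Module.End k (BigIndex r s t → k) where
  toFun w p :=
    if i ∈ p.1.2 ∨ i ∈ p.2.1 then 0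
    else (((-1 : ℤ) ^ p.1.2.card) * ksign i p.1.2 * ksign i p.2.1) •
      w ((p.1.1, insert i p.1.2), (insert i p.2.1, p.2.2))
  map_add' f g := by funext p; by_cases h : i ∈ p.1.2 ∨ i ∈ p.2.1 <;> simp [h, smul_add]
  map_smul' a f := by funext p; by_cases h : i ∈ p.1.2 ∨ i ∈ p.2.1 <;> simp [h]; ring

/-- The exponential `exp(∑_i η_i^* ⊗ η̄_i^*)` (a finite sum, the operator being nilpotent:
`(∑_i η_i^* ⊗ η̄_i^*)^m = 0` for `m > s`). -/
def expCoupling : Module.End k (BigIndex r s t → k) :=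
  ∑ m ∈ Finset.range (s + 1),
    algebraMap ℚ k (1 / (Nat.factorial m : ℚ)) • (∑ i, couplingOp k i) ^ m

lemma sum_insert_reindex (A : Finset (Fin s)) (m : ℕ) (f : Finset (Fin s) → k) :
    ∑ i ∈ Aᶜ, ∑ E ∈ Finset.powersetCard m (insert i A)ᶜ, f (insert i E) =
      (m + 1) • ∑ E ∈ Finset.powersetCard (m + 1) Aᶜ, f E := by
  have hR : ∀ E ∈ Finset.powersetCard (m + 1) Aᶜ, (m + 1) • f E = ∑ _j ∈ E, f E := by
    intro E hE
    rw [Finset.sum_const, (Finset.mem_powersetCard.mp hE).2]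
  rw [Finset.smul_sum, Finset.sum_congr rfl hR, Finset.sum_sigma', Finset.sum_sigma']
  refine Finset.sum_nbij' (fun x => ⟨insert x.1 x.2, x.1⟩) (fun y => ⟨y.2, y.1.erase y.2⟩)
    ?_ ?_ ?_ ?_ ?_
  · rintro ⟨i, E⟩ hx
    simp only [Finset.mem_sigma, Finset.mem_powersetCard, Finset.compl_insert] at hx ⊢
    obtain ⟨hi, hE, hcard⟩ := hx
    have hiE : i ∉ E := fun h => (Finset.mem_erase.mp (hE h)).1 rfl
    refine ⟨⟨Finset.insert_subset (by simpa using hi)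
      (hE.trans (Finset.erase_subset _ _)), ?_⟩, Finset.mem_insert_self _ _⟩
    rw [Finset.card_insert_of_notMem hiE, hcard]
  · rintro ⟨E, j⟩ hy
    simp only [Finset.mem_sigma, Finset.mem_powersetCard, Finset.compl_insert] at hy ⊢
    obtain ⟨⟨hE, hcard⟩, hj⟩ := hy
    refine ⟨hE hj, ?_, ?_⟩
    · intro x hx
      exact Finset.mem_erase.mpr ⟨(Finset.mem_erase.mp hx).1, hE (Finset.mem_of_mem_erase hx)⟩
    · rw [Finset.card_erase_of_mem hj, hcard]; rfl
  · rintro ⟨i, E⟩ hx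
    simp only [Finset.mem_sigma, Finset.mem_powersetCard, Finset.compl_insert] at hx
    have hiE : i ∉ E := fun h => (Finset.mem_erase.mp (hx.2.1 h)).1 rfl
    simp [Finset.erase_insert hiE]
  · rintro ⟨E, j⟩ hy
    simp only [Finset.mem_sigma, Finset.mem_powersetCard] at hy
    simp [Finset.insert_erase hy.2]
  · rintro ⟨i, E⟩ _; rfl

lemma ksign_sq (i : Fin s) (A : Finset (Fin s)) : ksign i A * ksign i A = 1 := by
  rw [ksign, ← pow_add]
  exact Even.neg_one_pow ⟨_, rfl⟩

lemma pow_coupling_apply (w : BigIndex r s t → k) (T : Finset (Fin t)) (S : Finset (Fin r)) :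
    ∀ (m : ℕ) (A : Finset (Fin s)),
      (((∑ i, couplingOp k i) ^ m) w) ((T, A), (A, S)) =
        ((m.factorial : ℤ) * (-1) ^ (A.card * m + m.choose 2)) •
          ∑ E ∈ Finset.powersetCard m Aᶜ, w ((T, A ∪ E), (A ∪ E, S)) := by
  intro m
  induction m with
  | zero =>
    intro A
    simp [Finset.powersetCard_zero]
  | succ m ih =>
    intro A
    rw [pow_succ', Module.End.mul_apply]
    have h1 : (((∑ i, couplingOp k i)) (((∑ i, couplingOp k i) ^ m) w)) ((T, A), (A, S)) =
        ∑ i, (couplingOp k i (((∑ i, couplingOp k i) ^ m) w)) ((T, A), (A, S)) := by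
      rw [LinearMap.sum_apply, Finset.sum_apply]
    rw [h1]
    have h2 : ∀ i ∈ Aᶜ,
        (couplingOp k i (((∑ i, couplingOp k i) ^ m) w)) ((T, A), (A, S)) =
        ((Nat.factorial m : ℤ) * (-1) ^ (A.card + ((A.card + 1) * m + m.choose 2))) •
          ∑ E ∈ Finset.powersetCard m (insert i A)ᶜ,
            w ((T, A ∪ insert i E), (A ∪ insert i E, S)) := by
      intro i hi
      have hiA : i ∉ A := Finset.mem_compl.mp hi
      show (if i ∈ A ∨ i ∈ A then 0 else
        (((-1 : ℤ) ^ A.card) * ksign i A * ksign i A) •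
          (((∑ i, couplingOp k i) ^ m) w) ((T, insert i A), (insert i A, S))) = _
      rw [if_neg (by simp [hiA]), mul_assoc, ksign_sq, mul_one,
        ih (insert i A), Finset.card_insert_of_notMem hiA, smul_smul]
      congr 1
      · rw [pow_add]; ring
      · apply Finset.sum_congr rfl
        intro E _
        rw [Finset.insert_union, ← Finset.union_insert]
    have hzero : ∀ i ∈ A,
        (couplingOp k i (((∑ i, couplingOp k i) ^ m) w)) ((T, A), (A, S)) = 0 := by
      intro i hi
      show (if i ∈ A ∨ i ∈ A then (0 : k) else _) = 0
      rw [if_pos (Or.inl hi)]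
    rw [← Finset.sum_compl_add_sum A, Finset.sum_congr rfl hzero, Finset.sum_const_zero,
      add_zero, Finset.sum_congr rfl h2, ← Finset.smul_sum,
      sum_insert_reindex k A m (fun E => w ((T, A ∪ E), (A ∪ E, S))),
      ← natCast_zsmul, smul_smul]
    congr 1
    have hch : (m + 1).choose 2 = m + m.choose 2 := by
      rw [Nat.choose_succ_succ, Nat.choose_one_right]
    rw [hch, Nat.factorial_succ]
    push_cast
    rw [show A.card + ((A.card + 1) * m + m.choose 2) =
      A.card * (m + 1) + (m + m.choose 2) by ring]
    ring



/-- Composition of Hom-spaces corresponds, under `ν ⊗ ν` on the source and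
`ν` on the target, to `P ∘ exp(∑_i η_i^* ⊗ η̄_i^*)`, where `P` is the projection onto the
subspace with no `η`'s or `η̄`'s (i.e. evaluation of the coefficient function at pairs whose
`η`- and `η̄`-components are empty). -/
theorem nu_of_composition (φ : (Finset (Fin s) → k) →ₗ[k] (Finset (Fin t) → k))
    (ψ : (Finset (Fin r) → k) →ₗ[k] (Finset (Fin s) → k))
    (T : Finset (Fin t)) (S : Finset (Fin r)) :
    nuG k (φ ∘ₗ ψ) (T, S) =
      expCoupling k (fun p : BigIndex r s t => nuG k φ p.1 * nuG k ψ p.2)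
        ((T, ∅), (∅, S)) := by
  set w : BigIndex r s t → k := fun p => nuG k φ p.1 * nuG k ψ p.2 with hw
  -- compute the right-hand side
  have hrhs : expCoupling k w ((T, ∅), (∅, S)) =
      ∑ E : Finset (Fin s), ((-1 : ℤ) ^ (E.card.choose 2)) • w ((T, E), (E, S)) := by
    rw [expCoupling, LinearMap.sum_apply, Finset.sum_apply]
    have hterm : ∀ m ∈ Finset.range (s + 1),
        ((algebraMap ℚ k (1 / (Nat.factorial m : ℚ)) • (∑ i, couplingOp k i) ^ m) w)
          ((T, ∅), (∅, S)) =
        ∑ E ∈ Finset.powersetCard m (Finset.univ : Finset (Fin s)),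
          ((-1 : ℤ) ^ (E.card.choose 2)) • w ((T, E), (E, S)) := by
      intro m _
      rw [LinearMap.smul_apply, Pi.smul_apply, pow_coupling_apply]
      simp only [Finset.card_empty, Nat.zero_mul, zero_add, Finset.compl_empty,
        Finset.empty_union]
      rw [Finset.smul_sum, Finset.smul_sum]
      apply Finset.sum_congr rfl
      intro E hE
      have hcard : E.card = m := (Finset.mem_powersetCard.mp hE).2
      have hfac : (algebraMap ℚ k) (1 / (Nat.factorial m : ℚ)) * ((Nat.factorial m : ℕ) : k)
          = 1 := by
        rw [← map_natCast (algebraMap ℚ k) (Nat.factorial m), ← map_mul,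
          one_div, inv_mul_cancel₀ (by exact_mod_cast Nat.factorial_ne_zero m), map_one]
      rw [hcard, zsmul_eq_mul, zsmul_eq_mul, smul_eq_mul]
      push_cast
      linear_combination ((-1 : k) ^ (m.choose 2) * w ((T, E), (E, S))) * hfac
    have key : ∑ E ∈ (Finset.univ : Finset (Fin s)).powerset,
        ((-1 : ℤ) ^ (E.card.choose 2)) • w ((T, E), (E, S)) =
        ∑ m ∈ Finset.range ((Finset.univ : Finset (Fin s)).card + 1),
          ∑ E ∈ Finset.powersetCard m (Finset.univ : Finset (Fin s)),
            ((-1 : ℤ) ^ (E.card.choose 2)) • w ((T, E), (E, S)) := by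
      rw [Finset.powerset_card_disjiUnion]; exact Finset.sum_disjiUnion _ _ _
    rw [Finset.powerset_univ, Finset.card_univ, Fintype.card_fin] at key
    rw [Finset.sum_congr rfl hterm]
    exact key.symm
  rw [hrhs]
  -- compute the left-hand side
  have hdec : ψ (Pi.single S 1) = ∑ E : Finset (Fin s),
      ψ (Pi.single S 1) E • (Pi.single E 1 : Finset (Fin s) → k) := by
    funext x
    rw [Finset.sum_apply]
    simp [Pi.single_apply]
  rw [nuG, LinearMap.comp_apply, hdec, map_sum, Finset.sum_apply, Finset.smul_sum]
  apply Finset.sum_congr rfl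
  intro E _
  have hsq : (((-1 : ℤ) ^ (E.card.choose 2) : ℤ) : k) *
      (((-1 : ℤ) ^ (E.card.choose 2) : ℤ) : k) = 1 := by
    rw [← Int.cast_mul, ← pow_add, Even.neg_one_pow ⟨_, rfl⟩, Int.cast_one]
  simp only [hw, nuG, LinearMap.map_smul, Pi.smul_apply, zsmul_eq_mul, smul_eq_mul]
  push_cast
  have hsq' : ((-1 : k) ^ (E.card.choose 2 * 2)) = 1 :=
    Even.neg_one_pow ⟨_, by ring⟩
  linear_combination (-1 * (-1 : k) ^ (S.card.choose 2) * ψ (Pi.single S 1) E *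
    φ (Pi.single E 1) T) * hsq'


end Stmt15
end
end
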